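/- For a two-component Gaussian mixture density p(x) = w·N(x; μ₁, σ²) + (1−w)·N(x; μ₂, σ²) with equal variances and w ∈ (0,1): if |μ₁ − μ₂| ≤ 2σ then p is unimodal (has at most one local maximum), i.e., two ITD peaks closer than 2σ merge into a single peak. -/

import Mathlib

open Real

/-! Auxiliary lemmas about `Real.tanh`. -/

private lemma my_hasDerivAt_tanh (x : ℝ) :
    HasDerivAt Real.tanh (1 / Real.cosh x ^ 2) x := by
  have h := (Real.hasDerivAt_sinh x).div (Real.hasDerivAt_cosh x) (Real.cosh_pos x).ne'
  have hfun : (Real.sinh / Real.cosh) = Real.tanh := by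
    funext y; rw [Pi.div_apply, Real.tanh_eq_sinh_div_cosh]
  rw [hfun] at h
  refine h.congr_deriv (Eq.symm ?_)
  have hc := Real.cosh_sq x
  congr 1
  nlinarith [hc]

private lemma my_sinh_ne_zero {x : ℝ} (hx : x ≠ 0) : Real.sinh x ≠ 0 := by
  rw [Real.sinh_eq]
  intro h
  have : Real.exp x = Real.exp (-x) := by
    have := sub_eq_zero.mp (by linarith [h] : Real.exp x - Real.exp (-x) = 0)
    linarith [this]
  have := Real.exp_injective this
  apply hx; linarith

private lemma my_tanh_sq_pos {x : ℝ} (hx : x ≠ 0) : 0 < Real.tanh x ^ 2 := by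
  have h : Real.tanh x ≠ 0 := by
    rw [Real.tanh_eq_sinh_div_cosh]
    exact div_ne_zero (my_sinh_ne_zero hx) (Real.cosh_pos x).ne'
  positivity

private lemma my_monotone_tanh : Monotone Real.tanh := by
  have hdiff : Differentiable ℝ Real.tanh := fun x => (my_hasDerivAt_tanh x).differentiableAt
  apply monotone_of_deriv_nonneg hdiff
  intro x
  rw [(my_hasDerivAt_tanh x).deriv]
  positivity

/-- `x - tanh x` is strictly monotone. -/
private lemma my_sub_tanh_strictMono : StrictMono (fun x : ℝ => x - Real.tanh x) := by
  set f : ℝ → ℝ := fun x => x - Real.tanh x with hf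
  have hder : ∀ x : ℝ, HasDerivAt f (Real.tanh x ^ 2) x := by
    intro x
    have h := (hasDerivAt_id x).sub (my_hasDerivAt_tanh x)
    refine h.congr_deriv (Eq.symm ?_)
    have hc := Real.cosh_sq x
    have hcpos := Real.cosh_pos x
    rw [Real.tanh_eq_sinh_div_cosh]
    field_simp
    nlinarith [hc]
  have hcont : Continuous f := by
    have : Differentiable ℝ f := fun x => (hder x).differentiableAt
    exact this.continuous
  have hIci : StrictMonoOn f (Set.Ici (0:ℝ)) := by
    apply strictMonoOn_of_deriv_pos (convex_Ici 0) hcont.continuousOn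
    intro x hx
    rw [interior_Ici] at hx
    rw [(hder x).deriv]
    exact my_tanh_sq_pos (ne_of_gt hx)
  have hIic : StrictMonoOn f (Set.Iic (0:ℝ)) := by
    apply strictMonoOn_of_deriv_pos (convex_Iic 0) hcont.continuousOn
    intro x hx
    rw [interior_Iic] at hx
    rw [(hder x).deriv]
    exact my_tanh_sq_pos (ne_of_lt hx)
  intro x y hxy
  rcases le_or_gt 0 x with hx | hx
  · exact hIci hx (le_of_lt (lt_of_le_of_lt hx hxy)) hxy
  · rcases le_or_gt y 0 with hy | hy
    · exact hIic (le_of_lt hx) hy hxy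
    · exact lt_trans (hIic (le_of_lt hx) Set.self_mem_Iic hx) (hIci Set.self_mem_Ici (le_of_lt hy) hy)

/-- Strict 1-Lipschitz bound for `tanh`. -/
private lemma my_tanh_strict_lipschitz {s t : ℝ} (h : s < t) :
    0 ≤ Real.tanh t - Real.tanh s ∧ Real.tanh t - Real.tanh s < t - s := by
  constructor
  · have := my_monotone_tanh h.le; linarith
  · have := my_sub_tanh_strictMono h; simp only at this; linarith

private lemma my_tanh_abs_lt {s t : ℝ} (h : s ≠ t) :
    |Real.tanh t - Real.tanh s| < |t - s| := by
  rcases lt_or_gt_of_ne h with hst | hst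
  · obtain ⟨h1, h2⟩ := my_tanh_strict_lipschitz hst
    rw [abs_of_nonneg h1, abs_of_pos (by linarith : (0:ℝ) < t - s)]
    exact h2
  · obtain ⟨h1, h2⟩ := my_tanh_strict_lipschitz hst
    rw [abs_sub_comm, abs_sub_comm t s, abs_of_nonneg h1,
      abs_of_pos (by linarith : (0:ℝ) < s - t)]
    exact h2

private lemma my_tanh_exp_form (u : ℝ) :
    Real.tanh u = (Real.exp (2 * u) - 1) / (Real.exp (2 * u) + 1) := by
  rw [Real.tanh_eq_sinh_div_cosh, Real.sinh_eq, Real.cosh_eq]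
  have h1 : Real.exp u + Real.exp (-u) ≠ 0 := by positivity
  have h2 : Real.exp (2 * u) + 1 ≠ 0 := by positivity
  have h3 : Real.exp (2 * u) = Real.exp u * Real.exp u := by
    rw [two_mul, Real.exp_add]
  have h4 : Real.exp (-u) = (Real.exp u)⁻¹ := Real.exp_neg u
  rw [h3, h4]
  have h5 : Real.exp u ≠ 0 := Real.exp_ne_zero u
  field_simp

set_option maxHeartbeats 2000000 in
/-- A two-component equal-variance Gaussian mixture whose means are at most
`2σ` apart is unimodal: it has no two distinct local maxima. -/
theorem gaussian_mixture_unimodal_when_close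
    (w μ₁ μ₂ σ : ℝ) (hw : w ∈ Set.Ioo (0 : ℝ) 1) (hσ : 0 < σ)
    (hclose : |μ₁ - μ₂| ≤ 2 * σ) :
    let N : ℝ → ℝ → ℝ := fun x μ =>
      (1 / (σ * Real.sqrt (2 * π))) * Real.exp (-(x - μ) ^ 2 / (2 * σ ^ 2))
    let p : ℝ → ℝ := fun x => w * N x μ₁ + (1 - w) * N x μ₂
    ¬ ∃ a b : ℝ, a ≠ b ∧ IsLocalMax p a ∧ IsLocalMax p b := by
  intro N p
  rintro ⟨a, b, hab, ha, hb⟩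
  obtain ⟨hw0, hw1⟩ := hw
  have hw1' : 0 < 1 - w := by linarith
  have hσ2 : (0:ℝ) < σ ^ 2 := by positivity
  set Δ : ℝ := μ₁ - μ₂ with hΔ
  set m : ℝ := (μ₁ + μ₂) / 2 with hm
  set α : ℝ := Δ / (2 * σ ^ 2) with hα
  set c : ℝ := Real.log (w / (1 - w)) / 2 with hc
  set C : ℝ := 1 / (σ * Real.sqrt (2 * π)) with hC
  have hCpos : 0 < C := by
    rw [hC]
    have : (0:ℝ) < Real.sqrt (2 * π) := Real.sqrt_pos.mpr (by positivity)
    positivity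
  set G : ℝ → ℝ := fun x => x - m - (Δ / 2) * Real.tanh (α * (x - m) + c) with hG
  -- the exponential factors
  set E : ℝ → ℝ → ℝ := fun x μ => Real.exp (-(x - μ) ^ 2 / (2 * σ ^ 2)) with hE
  have hEpos : ∀ x μ, 0 < E x μ := fun x μ => Real.exp_pos _
  -- derivative of p
  have hderiv : ∀ x : ℝ, HasDerivAt p
      (w * (C * (E x μ₁ * (-(x - μ₁) / σ ^ 2))) +
       (1 - w) * (C * (E x μ₂ * (-(x - μ₂) / σ ^ 2)))) x := by
    intro x
    have hinner : ∀ μ : ℝ, HasDerivAt (fun y => -(y - μ) ^ 2 / (2 * σ ^ 2))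
        (-(x - μ) / σ ^ 2) x := by
      intro μ
      have h1 : HasDerivAt (fun y : ℝ => (y - μ) ^ 2) (2 * (x - μ)) x := by
        have := ((hasDerivAt_id x).sub_const μ).pow 2
        refine this.congr_deriv ?_
        simp
      have h2 := (h1.neg).div_const (2 * σ ^ 2)
      refine h2.congr_deriv (Eq.symm ?_)
      field_simp
    have hExp : ∀ μ : ℝ, HasDerivAt (fun y => Real.exp (-(y - μ) ^ 2 / (2 * σ ^ 2)))
        (E x μ * (-(x - μ) / σ ^ 2)) x := by
      intro μ
      exact (hinner μ).exp
    have h1 := (((hExp μ₁).const_mul C).const_mul w)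
    have h2 := (((hExp μ₂).const_mul C).const_mul (1 - w))
    have := h1.add h2
    exact this
  -- critical point equation
  have hcrit : ∀ x : ℝ, IsLocalMax p x →
      w * E x μ₁ * (x - μ₁) + (1 - w) * E x μ₂ * (x - μ₂) = 0 := by
    intro x hx
    have h0 : deriv p x = 0 := hx.deriv_eq_zero
    rw [(hderiv x).deriv] at h0
    have hC' : C ≠ 0 := ne_of_gt hCpos
    have hσ2' : σ ^ 2 ≠ 0 := ne_of_gt hσ2
    field_simp at h0
    nlinarith [h0]
  -- tanh identity: tanh (α (x-m) + c) = (w E₁ - (1-w) E₂) / (w E₁ + (1-w) E₂)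
  have htanh : ∀ x : ℝ, Real.tanh (α * (x - m) + c) =
      (w * E x μ₁ - (1 - w) * E x μ₂) / (w * E x μ₁ + (1 - w) * E x μ₂) := by
    intro x
    have hexp2c : Real.exp (2 * c) = w / (1 - w) := by
      rw [hc]
      rw [(by ring : 2 * (Real.log (w / (1 - w)) / 2) = Real.log (w / (1 - w)))]
      exact Real.exp_log (by positivity)
    have hexpratio : Real.exp (2 * (α * (x - m))) = E x μ₁ / E x μ₂ := by
      rw [hE]
      rw [← Real.exp_sub]
      congr 1
      rw [hα, hΔ, hm]
      field_simp
      ring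
    have key : Real.exp (2 * (α * (x - m) + c)) = (w / (1 - w)) * (E x μ₁ / E x μ₂) := by
      rw [(by ring : 2 * (α * (x - m) + c) = 2 * (α * (x - m)) + 2 * c), Real.exp_add,
        hexpratio, hexp2c]
      ring
    rw [my_tanh_exp_form, key]
    have h1 : E x μ₂ ≠ 0 := ne_of_gt (hEpos x μ₂)
    have h2 : (1:ℝ) - w ≠ 0 := ne_of_gt hw1'
    have hS : 0 < w * E x μ₁ + (1 - w) * E x μ₂ := by
      have := hEpos x μ₁; have := hEpos x μ₂; positivity
    have hden : w / (1 - w) * (E x μ₁ / E x μ₂) + 1 ≠ 0 := by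
      have h3 : 0 < w / (1 - w) * (E x μ₁ / E x μ₂) := by
        have := hEpos x μ₁; have := hEpos x μ₂; positivity
      positivity
    field_simp
  -- local maxima are zeros of G
  have hGzero : ∀ x : ℝ, IsLocalMax p x → G x = 0 := by
    intro x hx
    have h0 := hcrit x hx
    have hS : 0 < w * E x μ₁ + (1 - w) * E x μ₂ := by
      have := hEpos x μ₁; have := hEpos x μ₂; positivity
    have hkey : x - m - Δ / 2 *
        ((w * E x μ₁ - (1 - w) * E x μ₂) / (w * E x μ₁ + (1 - w) * E x μ₂)) =
        (w * E x μ₁ * (x - μ₁) + (1 - w) * E x μ₂ * (x - μ₂)) /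
          (w * E x μ₁ + (1 - w) * E x μ₂) := by
      rw [hΔ, hm]
      field_simp
      ring
    rw [hG]
    simp only
    rw [htanh x, hkey, h0, zero_div]
  -- G is strictly monotone
  have hmono : StrictMono G := by
    intro x y hxy
    rw [hG]; simp only
    by_cases hΔ0 : Δ = 0
    · rw [hΔ0]; simp; linarith
    · set u : ℝ := α * (x - m) + c
      set v : ℝ := α * (y - m) + c
      have huv : u ≠ v := by
        intro h
        apply hΔ0
        have : α * (x - m) = α * (y - m) := by
          simpa [u, v] using h
        have hα0 : α ≠ 0 := by
          rw [hα]; exact div_ne_zero hΔ0 (by positivity)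
        have := mul_left_cancel₀ hα0 this
        linarith
      have hlt := my_tanh_abs_lt huv
      have hvu : |v - u| = |Δ| / (2 * σ ^ 2) * (y - x) := by
        have : v - u = α * (y - x) := by simp only [u, v]; ring
        rw [this, abs_mul, abs_of_pos (by linarith : (0:ℝ) < y - x), hα, abs_div,
          abs_of_pos (by positivity : (0:ℝ) < 2 * σ ^ 2)]
      rw [hvu] at hlt
      set D : ℝ := Real.tanh v - Real.tanh u with hD
      have habsΔ : |Δ| ≤ 2 * σ := hclose
      have hΔabs_pos : 0 < |Δ| := abs_pos.mpr hΔ0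
      have step1 : |Δ / 2 * D| < |Δ| / 2 * (|Δ| / (2 * σ ^ 2) * (y - x)) := by
        rw [abs_mul, abs_div, abs_two]
        apply mul_lt_mul_of_pos_left hlt (by positivity)
      have step2 : |Δ| / 2 * (|Δ| / (2 * σ ^ 2) * (y - x)) ≤ y - x := by
        have hyx : (0:ℝ) < y - x := by linarith
        have hsq : |Δ| * |Δ| ≤ 4 * σ ^ 2 := by nlinarith [abs_nonneg Δ]
        have h2 : |Δ| / 2 * (|Δ| / (2 * σ ^ 2) * (y - x)) =
            |Δ| * |Δ| * (y - x) / (4 * σ ^ 2) := by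
          field_simp
          ring
        rw [h2, div_le_iff₀ (by positivity : (0:ℝ) < 4 * σ ^ 2)]
        have hnn := mul_nonneg (by linarith : (0:ℝ) ≤ 4 * σ ^ 2 - |Δ| * |Δ|) hyx.le
        nlinarith [hnn]
      have : Δ / 2 * D ≤ |Δ / 2 * D| := le_abs_self _
      nlinarith [step1, step2, this]
  exact hab (hmono.injective ((hGzero a ha).trans (hGzero b hb).symm))
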